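/- Let 1 ≤ p < ∞ and let φ : ℕ → ℕ be a map such that the set {|φ⁻¹({n})| : n ∈ ℕ} of fiber cardinalities is bounded, so that the composition operator C_φ : ℓᵖ → ℓᵖ given by (C_φ f)(n) = f(φ(n)) is a bounded linear operator. Then C_φ is a right zero-divisor in B(ℓᵖ) (i.e., there exists S ∈ B(ℓᵖ) with S ≠ 0 and S∘C_φ = 0) if and only if φ is not injective. -/

import Mathlib

open Filter ENNReal

/-- Let `1 ≤ p < ∞` and let `φ : ℕ → ℕ` have uniformly bounded fiber cardinalities, so
that the composition operator `C_φ : ℓᵖ → ℓᵖ`, `(C_φ f) n = f (φ n)`, is bounded. Then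
`C_φ` is a right zero-divisor in `B(ℓᵖ)` if and only if `φ` is not injective. -/
theorem composition_op_right_zeroDivisor_iff (p : ℝ≥0∞) [Fact (1 ≤ p)] (hp : p ≠ ⊤)
    (φ : ℕ → ℕ)
    (hfib : ∃ N : ℕ, ∀ n : ℕ, (φ ⁻¹' {n}).Finite ∧ (φ ⁻¹' {n}).ncard ≤ N)
    (C : lp (fun _ : ℕ => ℂ) p →L[ℂ] lp (fun _ : ℕ => ℂ) p)
    (hC : ∀ (f : lp (fun _ : ℕ => ℂ) p) (n : ℕ), C f n = f (φ n)) :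
    (∃ S : lp (fun _ : ℕ => ℂ) p →L[ℂ] lp (fun _ : ℕ => ℂ) p, S ≠ 0 ∧ S.comp C = 0) ↔
      ¬ Function.Injective φ := by
  have h1p : 1 ≤ p := Fact.out
  have hp0 : p ≠ 0 := by
    intro h; rw [h] at h1p; simp at h1p
  have hptr : 0 < p.toReal := ENNReal.toReal_pos hp0 hp
  constructor
  · rintro ⟨S, hS, hSC⟩ hinj
    apply hS
    ext g n
    -- every g is in the range of C
    classical
    set f : ∀ _ : ℕ, ℂ := fun m => if h : ∃ k, φ k = m then g h.choose else 0 with hf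
    have hfφ : ∀ k, f (φ k) = g k := by
      intro k
      have h : ∃ k', φ k' = φ k := ⟨k, rfl⟩
      simp only [hf, dif_pos h]
      exact congrArg g (hinj h.choose_spec)
    have hmem : Memℓp f p := by
      apply memℓp_gen
      have hz : ∀ m ∉ Set.range φ, ‖f m‖ ^ p.toReal = 0 := by
        intro m hm
        have : f m = 0 := by
          simp only [hf]; rw [dif_neg]
          rintro ⟨k, hk⟩; exact hm ⟨k, hk⟩
        rw [this]; simp [Real.zero_rpow hptr.ne']
      rw [← hinj.summable_iff hz]
      have := (lp.memℓp g).summable hptr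
      convert this using 1
      ext k
      simp [Function.comp, hfφ k]
    have hCf : C ⟨f, hmem⟩ = g := by
      ext m
      rw [hC]
      exact hfφ m
    have : S g = 0 := by
      rw [← hCf]
      have := congrFun (congrArg DFunLike.coe hSC) ⟨f, hmem⟩
      simpa using this
    simp [this]
  · intro hni
    obtain ⟨a, b, hab, hne⟩ := Function.not_injective_iff.mp hni
    -- S f = single 0 (f a - f b)
    have hsingle_add : ∀ (x y : ℂ), (lp.single p 0 (x + y) : lp (fun _ : ℕ => ℂ) p) =
        lp.single p 0 x + lp.single p 0 y := by
      intro x y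
      ext j
      by_cases hj : j = 0
      · subst hj; simp [lp.single_apply_self]
      · simp only [lp.coeFn_add, Pi.add_apply]
        rw [lp.single_apply_ne (E := fun _ : ℕ => ℂ) p 0 (x + y) hj, lp.single_apply_ne (E := fun _ : ℕ => ℂ) p 0 x hj,
          lp.single_apply_ne (E := fun _ : ℕ => ℂ) p 0 y hj, add_zero]
    let L : lp (fun _ : ℕ => ℂ) p →ₗ[ℂ] lp (fun _ : ℕ => ℂ) p :=
      { toFun := fun f => lp.single p 0 (f a - f b)
        map_add' := by
          intro x y
          simp only [lp.coeFn_add, Pi.add_apply]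
          rw [show (x a + y a) - (x b + y b) = (x a - x b) + (y a - y b) by ring,
            hsingle_add]
        map_smul' := by
          intro c x
          simp only [lp.coeFn_smul, Pi.smul_apply, RingHom.id_apply, smul_eq_mul]
          rw [show c * x a - c * x b = c • (x a - x b) from by rw [smul_eq_mul]; ring,
            lp.single_smul] }
    have hLbound : ∀ f : lp (fun _ : ℕ => ℂ) p, ‖L f‖ ≤ 2 * ‖f‖ := by
      intro f
      have : ‖L f‖ = ‖f a - f b‖ := by
        exact lp.norm_single (E := fun _ : ℕ => ℂ) (pos_iff_ne_zero.mpr hp0) 0 (f a - f b)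
      rw [this]
      calc ‖f a - f b‖ ≤ ‖f a‖ + ‖f b‖ := norm_sub_le _ _
        _ ≤ ‖f‖ + ‖f‖ := add_le_add (lp.norm_apply_le_norm hp0 f a)
            (lp.norm_apply_le_norm hp0 f b)
        _ = 2 * ‖f‖ := by ring
    refine ⟨L.mkContinuous 2 hLbound, ?_, ?_⟩
    · intro h
      set e : lp (fun _ : ℕ => ℂ) p := lp.single p a 1 with he
      have h2 : L.mkContinuous 2 hLbound e = 0 := by rw [h]; rfl
      have h3 : (lp.single p 0 (e a - e b) : lp (fun _ : ℕ => ℂ) p) = 0 := h2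
      rw [he] at h3
      rw [lp.single_apply_self (E := fun _ : ℕ => ℂ) p a (1:ℂ), lp.single_apply_ne (E := fun _ : ℕ => ℂ) p a (1:ℂ) (Ne.symm hne)] at h3
      have h4 := congrFun (congrArg (Subtype.val) h3) 0
      rw [lp.single_apply_self] at h4
      simp at h4
    · apply ContinuousLinearMap.ext
      intro f
      show (lp.single p 0 ((C f) a - (C f) b) : lp (fun _ : ℕ => ℂ) p) = 0
      rw [hC, hC, hab, sub_self]
      ext j
      by_cases hj : j = 0
      · subst hj; simp [lp.single_apply_self]
      · rw [lp.single_apply_ne (E := fun _ : ℕ => ℂ) p 0 (0:ℂ) hj]; rfl
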